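/- For every λ ∈ (0, 1/2): (2λ(20λ − 87) + 3(9λ − 29)·ln(1−2λ)) / (160λ²) > (2λ² − 6λ − 3·ln(1−2λ)) / (8λ²). -/

import Mathlib

lemma stmt12_aux {x : ℝ} (h0 : 0 < x) (h1 : x < 1) :
    Real.log (1 - x) < -(x + x ^ 2 / 2 + x ^ 3 / 3 + x ^ 4 / 4) := by
  set f : ℝ → ℝ := fun t => -Real.log (1 - t) - (t + t ^ 2 / 2 + t ^ 3 / 3 + t ^ 4 / 4) with hf
  have hderiv : ∀ y ∈ Set.Ioo (0 : ℝ) 1, HasDerivAt f (y ^ 4 / (1 - y)) y := by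
    intro y hy
    have hy1 : (1 : ℝ) - y ≠ 0 := by have := hy.2; linarith [hy.2]
    have hlog : HasDerivAt (fun t : ℝ => Real.log (1 - t)) ((1 - y)⁻¹ * (-1)) y := by
      exact (Real.hasDerivAt_log hy1).comp y (((hasDerivAt_id y).const_sub 1))
    have hpoly : HasDerivAt (fun t : ℝ => t + t ^ 2 / 2 + t ^ 3 / 3 + t ^ 4 / 4)
        (1 + y + y ^ 2 + y ^ 3) y := by
      have h1 : HasDerivAt (fun t : ℝ => t) 1 y := hasDerivAt_id y
      have h2 : HasDerivAt (fun t : ℝ => t ^ 2 / 2) y y := by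
        simpa using (hasDerivAt_pow 2 y).div_const 2
      have h3 : HasDerivAt (fun t : ℝ => t ^ 3 / 3) (y ^ 2) y := by
        simpa using (hasDerivAt_pow 3 y).div_const 3
      have h4 : HasDerivAt (fun t : ℝ => t ^ 4 / 4) (y ^ 3) y := by
        simpa using (hasDerivAt_pow 4 y).div_const 4
      exact ((h1.add h2).add h3).add h4
    have := (hlog.neg).sub hpoly
    refine this.congr_deriv ?_
    field_simp
    ring
  have hmono : StrictMonoOn f (Set.Ico (0 : ℝ) 1) := by
    apply strictMonoOn_of_deriv_pos (convex_Ico 0 1)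
    · apply ContinuousOn.sub
      · apply ContinuousOn.neg
        apply ContinuousOn.log (by fun_prop)
        intro t ht
        have := ht.2
        simp only [Set.mem_Ico] at ht
        linarith [ht.2]
      · fun_prop
    · intro y hy
      rw [interior_Ico] at hy
      rw [(hderiv y hy).deriv]
      have hy1 : 0 < 1 - y := by linarith [hy.2]
      exact div_pos (pow_pos hy.1 4) hy1
  have h0' : (0:ℝ) ∈ Set.Ico (0:ℝ) 1 := by constructor <;> norm_num
  have hx' : x ∈ Set.Ico (0:ℝ) 1 := ⟨le_of_lt h0, h1⟩
  have := hmono h0' hx' h0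
  simp only [hf] at this
  norm_num at this
  linarith

/-- A variable-rate (human-like) agent always incurs strictly larger cost than a
constant-rate (machine-like) agent with the same average rate. -/
theorem stmt12 (lam : ℝ) (h : lam ∈ Set.Ioo (0 : ℝ) (1 / 2)) :
    (2 * lam ^ 2 - 6 * lam - 3 * Real.log (1 - 2 * lam)) / (8 * lam ^ 2) <
      (2 * lam * (20 * lam - 87) + 3 * (9 * lam - 29) * Real.log (1 - 2 * lam)) /
        (160 * lam ^ 2) := by
  obtain ⟨h0, h1⟩ := h
  have hx0 : 0 < 2 * lam := by linarith
  have hx1 : 2 * lam < 1 := by linarith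
  have key := stmt12_aux hx0 hx1
  rw [div_lt_div_iff₀ (by positivity) (by positivity)]
  have hL : 0 < -(2 * lam + (2 * lam) ^ 2 / 2 + (2 * lam) ^ 3 / 3 + (2 * lam) ^ 4 / 4)
      - Real.log (1 - 2 * lam) := by linarith
  have hmain : 0 < lam ^ 2 * (1 - lam) *
      (-(2 * lam + (2 * lam) ^ 2 / 2 + (2 * lam) ^ 3 / 3 + (2 * lam) ^ 4 / 4)
        - Real.log (1 - 2 * lam)) :=
    mul_pos (mul_pos (pow_pos h0 2) (by linarith)) hL
  have hpoly : 0 < lam ^ 5 * (1 + 2 * lam - 6 * lam ^ 2) :=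
    mul_pos (pow_pos h0 5) (by nlinarith)
  nlinarith [hmain, hpoly, pow_pos h0 3, pow_pos h0 5]
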